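/- Let g and h be arithmetic functions with g(n) ≥ h(n) ≥ 0 for all positive integers n. Then for every real x ≥ 1 and every positive integer ℓ, 𝔼((Σ_{n ≤ x} 𝕏(n) g(n))^{2ℓ}) ≥ 𝔼((Σ_{n ≤ x} 𝕏(n) h(n))^{2ℓ}). -/

import Mathlib

open MeasureTheory ProbabilityTheory Finset

/-- The Sato–Tate measure `dμ_st(t) = (2/π) sin²(t) dt` on `[0, π]`. -/
noncomputable def satoTate : Measure ℝ :=
  (volume.restrict (Set.Icc 0 Real.pi)).withDensity
    fun t => ENNReal.ofReal (2 / Real.pi * Real.sin t ^ 2)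

/-- The random variable `𝕏(n) = ∏_{p^a ∥ n} U_a(cos θ_p)`, where `U_a` is the `a`-th
Chebyshev polynomial of the second kind (i.e. `tr Symᵃ`). In particular `𝕏(1) = 1`. -/
noncomputable def X {Ω : Type*} (θ : ℕ → Ω → ℝ) (n : ℕ) (ω : Ω) : ℝ :=
  ∏ p ∈ n.primeFactors,
    (Polynomial.Chebyshev.U ℝ ((n.factorization p : ℕ) : ℤ)).eval (Real.cos (θ p ω))

namespace SatoTateAux

open Polynomial.Chebyshev Real
open scoped ENNReal NNReal


lemma sin_mul_sin (x y : ℝ) : Real.sin x * Real.sin y = (Real.cos (x - y) - Real.cos (x + y)) / 2 := by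
  rw [Real.cos_sub, Real.cos_add]; ring

lemma CG (a b : ℕ) (t : ℝ) (ht : Real.sin t ≠ 0) :
    (U ℝ (a:ℤ)).eval (Real.cos t) * (U ℝ (b:ℤ)).eval (Real.cos t) =
    ∑ j ∈ Finset.range (min a b + 1), (U ℝ ((a + b - 2*j : ℕ) : ℤ)).eval (Real.cos t) := by
  have key : ∀ n : ℤ, (U ℝ n).eval (Real.cos t) * Real.sin t = Real.sin (((n:ℝ) + 1) * t) := by
    intro n; have := U_real_cos t n; push_cast at this ⊢; exact this
  set m := min a b with hm
  set f : ℕ → ℝ := fun j => Real.cos (((a:ℝ) + b + 2 - 2*j)*t)/2 with hf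
  have term : ∀ j : ℕ, Real.sin (((a:ℝ) + b - 2*j + 1) * t) * Real.sin t = f (j+1) - f j := by
    intro j
    rw [sin_mul_sin, hf]
    push_cast
    ring_nf
  have tele : ∑ j ∈ Finset.range (m+1), (f (j+1) - f j) = f (m+1) - f 0 :=
    Finset.sum_range_sub f (m+1)
  have lhs_eq : Real.sin (((a:ℝ) + 1) * t) * Real.sin (((b:ℝ) + 1) * t) = f (m+1) - f 0 := by
    rw [sin_mul_sin, hf]
    have h1 : ((a:ℝ) + b + 2 - 2*((m:ℝ)+1))*t = ((a:ℝ) - b)*t ∨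
        ((a:ℝ) + b + 2 - 2*((m:ℝ)+1))*t = -(((a:ℝ) - b)*t) := by
      rcases Nat.le_total a b with hab | hab
      · right; rw [hm, min_eq_left hab]; push_cast; ring
      · left; rw [hm, min_eq_right hab]; push_cast; ring
    have h2 : Real.cos (((a:ℝ) + b + 2 - 2*((m:ℝ)+1))*t) = Real.cos (((a:ℝ) - b)*t) := by
      rcases h1 with h | h <;> rw [h]
      exact Real.cos_neg _
    push_cast
    rw [h2]
    ring_nf
  apply mul_right_cancel₀ (b := Real.sin t * Real.sin t) (by positivity)
  have rhs : ∀ j ∈ Finset.range (m+1),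
      (U ℝ ((a + b - 2*j : ℕ) : ℤ)).eval (Real.cos t) * (Real.sin t * Real.sin t) = f (j+1) - f j := by
    intro j hj
    simp only [Finset.mem_range] at hj
    have h2 : 2*j ≤ a + b := by omega
    rw [← mul_assoc, key, ← term]
    congr 2
    push_cast [Nat.cast_sub h2]
    ring
  rw [Finset.sum_mul, Finset.sum_congr rfl rhs, tele, ← lhs_eq,
    show (U ℝ (a:ℤ)).eval (Real.cos t) * (U ℝ (b:ℤ)).eval (Real.cos t) * (Real.sin t * Real.sin t)
      = ((U ℝ (a:ℤ)).eval (Real.cos t) * Real.sin t) * ((U ℝ (b:ℤ)).eval (Real.cos t) * Real.sin t) by ring,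
    key, key]
  push_cast
  ring_nf

lemma w_meas : Measurable (fun t : ℝ => (2 / Real.pi * Real.sin t ^ 2).toNNReal) := by
  measurability

instance : IsFiniteMeasure satoTate := by
  constructor
  rw [satoTate, withDensity_apply _ MeasurableSet.univ, Measure.restrict_univ]
  calc ∫⁻ t, ENNReal.ofReal (2 / Real.pi * Real.sin t ^ 2) ∂(volume.restrict (Set.Icc 0 Real.pi))
      ≤ ∫⁻ _, ENNReal.ofReal (2 / Real.pi) ∂(volume.restrict (Set.Icc 0 Real.pi)) := by
        apply lintegral_mono; intro t
        apply ENNReal.ofReal_le_ofReal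
        have h1 : Real.sin t ^ 2 ≤ 1 := by
          have := Real.sin_sq_le_one t; linarith
        have h2 : (0:ℝ) ≤ 2 / Real.pi := by positivity
        nlinarith
    _ = ENNReal.ofReal (2 / Real.pi) * volume (Set.Icc 0 Real.pi) := by
        rw [lintegral_const, Measure.restrict_apply MeasurableSet.univ, Set.univ_inter]
    _ < ⊤ := by
        apply ENNReal.mul_lt_top ENNReal.ofReal_lt_top
        rw [Real.volume_Icc]; exact ENNReal.ofReal_lt_top

lemma satoTate_integral (f : ℝ → ℝ) :
    ∫ t, f t ∂satoTate = ∫ t in Set.Icc 0 Real.pi, (2 / Real.pi * Real.sin t ^ 2) * f t := by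
  rw [satoTate]
  have h : (fun t : ℝ => ENNReal.ofReal (2 / Real.pi * Real.sin t ^ 2)) =
      fun t : ℝ => ((2 / Real.pi * Real.sin t ^ 2).toNNReal : ℝ≥0∞) := rfl
  rw [h, integral_withDensity_eq_integral_smul w_meas]
  apply integral_congr_ae
  filter_upwards with t
  rw [NNReal.smul_def, Real.coe_toNNReal _ (by positivity)]
  simp [smul_eq_mul]

lemma integral_cos_nat_mul (k : ℕ) (hk : 1 ≤ k) :
    ∫ t in (0:ℝ)..Real.pi, Real.cos ((k:ℝ) * t) = 0 := by
  have hk0 : (k:ℝ) ≠ 0 := by positivity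
  rw [intervalIntegral.integral_comp_mul_left (f := Real.cos) hk0]
  simp [integral_cos, Real.sin_nat_mul_pi]

lemma orth (a : ℕ) (ha : 1 ≤ a) :
    ∫ t, (U ℝ (a:ℤ)).eval (Real.cos t) ∂satoTate = 0 := by
  have key : ∀ t : ℝ, (U ℝ (a:ℤ)).eval (Real.cos t) * Real.sin t = Real.sin (((a:ℝ) + 1) * t) := by
    intro t; have := U_real_cos t (a:ℤ); push_cast at this ⊢; exact this
  have step : ∀ t : ℝ, (2 / Real.pi * Real.sin t ^ 2) * (U ℝ (a:ℤ)).eval (Real.cos t)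
      = 1 / Real.pi * Real.cos ((a:ℝ) * t) - 1 / Real.pi * Real.cos (((a+2:ℕ):ℝ) * t) := by
    intro t
    have h2 : Real.sin t ^ 2 * (U ℝ (a:ℤ)).eval (Real.cos t)
        = Real.sin (((a:ℝ) + 1) * t) * Real.sin t := by
      rw [← key t]; ring
    rw [mul_assoc, h2, sin_mul_sin]
    push_cast
    ring_nf
  rw [satoTate_integral, MeasureTheory.integral_Icc_eq_integral_Ioc,
    ← intervalIntegral.integral_of_le Real.pi_pos.le,
    intervalIntegral.integral_congr (g := fun t => 1 / Real.pi * Real.cos ((a:ℝ) * t)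
      - 1 / Real.pi * Real.cos (((a+2:ℕ):ℝ) * t)) (fun t _ => step t),
    intervalIntegral.integral_sub, intervalIntegral.integral_const_mul,
    intervalIntegral.integral_const_mul, integral_cos_nat_mul a ha,
    integral_cos_nat_mul (a+2) (by omega)]
  · ring
  · apply Continuous.intervalIntegrable; continuity
  · apply Continuous.intervalIntegrable; continuity

noncomputable def P (s : Multiset ℕ) (t : ℝ) : ℝ :=
  (s.map (fun a : ℕ => (U ℝ (a:ℤ)).eval (Real.cos t))).prod

lemma P_cont (s : Multiset ℕ) : Continuous (P s) := by
  induction s using Multiset.induction_on with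
  | empty =>
    have h0 : P 0 = fun _ => 1 := by funext t; simp [P]
    rw [h0]; exact continuous_const
  | cons a s ih =>
    have h : P (a ::ₘ s) = fun t => (U ℝ (a:ℤ)).eval (Real.cos t) * P s t := by
      funext t; simp [P]
    rw [h]
    exact ((Polynomial.continuous _).comp Real.continuous_cos).mul ih

lemma P_bound (s : Multiset ℕ) : ∃ C : ℝ, ∀ t, |P s t| ≤ C := by
  have hF : Continuous (fun y => (s.map (fun a : ℕ => (U ℝ (a:ℤ)).eval y)).prod) := by
    induction s using Multiset.induction_on with
    | empty => simpa using continuous_const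
    | cons a s ih =>
      have h : (fun y => ((a ::ₘ s).map (fun a : ℕ => (U ℝ (a:ℤ)).eval y)).prod)
          = fun y => (U ℝ (a:ℤ)).eval y * (s.map (fun a : ℕ => (U ℝ (a:ℤ)).eval y)).prod := by
        funext y; simp
      rw [h]
      exact (Polynomial.continuous _).mul ih
  obtain ⟨C, hC⟩ := (isCompact_Icc (a := (-1:ℝ)) (b := 1)).exists_bound_of_continuousOn
    hF.continuousOn
  exact ⟨C, fun t => hC _ ⟨Real.neg_one_le_cos t, Real.cos_le_one t⟩⟩

lemma P_integrable (s : Multiset ℕ) : Integrable (P s) satoTate := by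
  obtain ⟨C, hC⟩ := P_bound s
  exact Integrable.mono' (integrable_const C) (P_cont s).aestronglyMeasurable
    (Filter.Eventually.of_forall fun t => by simpa using hC t)

lemma ae_sin_ne : ∀ᵐ t ∂satoTate, Real.sin t ≠ 0 := by
  have h1 : volume {t : ℝ | Real.sin t = 0} = 0 := by
    have hsub : {t : ℝ | Real.sin t = 0} ⊆ Set.range (fun n : ℤ => (n:ℝ) * Real.pi) := by
      intro t ht
      rw [Set.mem_setOf_eq, Real.sin_eq_zero_iff] at ht
      obtain ⟨n, hn⟩ := ht
      exact ⟨n, hn⟩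
    exact measure_mono_null hsub (Set.Countable.measure_zero (Set.countable_range _) _)
  have h2 : (volume.restrict (Set.Icc 0 Real.pi)) {t : ℝ | Real.sin t = 0} = 0 :=
    le_antisymm (le_trans (Measure.restrict_le_self _) h1.le) zero_le
  have h3 : satoTate {t : ℝ | Real.sin t = 0} = 0 :=
    (withDensity_absolutelyContinuous _ _) h2
  rw [ae_iff]
  simpa only [ne_eq, not_not] using h3

lemma J_aux : ∀ (n : ℕ) (s : Multiset ℕ), s.card ≤ n → 0 ≤ ∫ t, P s t ∂satoTate := by
  intro n
  induction n with
  | zero =>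
    intro s hs
    rw [Nat.le_zero, Multiset.card_eq_zero] at hs
    subst hs
    apply integral_nonneg; intro t; simp [P]
  | succ n ih =>
    intro s hs
    induction s using Multiset.induction_on with
    | empty => apply integral_nonneg; intro t; simp [P]
    | cons a s' _ =>
      induction s' using Multiset.induction_on with
      | empty =>
        rcases Nat.eq_zero_or_pos a with rfl | ha
        · apply integral_nonneg; intro t; simp [P, Polynomial.Chebyshev.U_zero]
        · have heq : ∫ t, P (a ::ₘ 0) t ∂satoTate = 0 := by
            rw [show P (a ::ₘ 0) = fun t => (U ℝ (a:ℤ)).eval (Real.cos t) by funext t; simp [P]]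
            exact orth a ha
          rw [heq]
      | cons b r _ =>
        have hcard : (a ::ₘ b ::ₘ r).card ≤ n + 1 := hs
        have hr : ∀ j : ℕ, ((a + b - 2*j) ::ₘ r).card ≤ n := by
          intro j; simp at hcard ⊢; omega
        have hae : ∀ᵐ t ∂satoTate, P (a ::ₘ b ::ₘ r) t
            = ∑ j ∈ Finset.range (min a b + 1), P ((a + b - 2*j) ::ₘ r) t := by
          filter_upwards [ae_sin_ne] with t ht
          have P_cons : ∀ (c : ℕ) (s : Multiset ℕ),
              P (c ::ₘ s) t = (U ℝ (c:ℤ)).eval (Real.cos t) * P s t := by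
            intro c s; simp [P]
          rw [P_cons, P_cons, ← mul_assoc, CG a b t ht, Finset.sum_mul]
          exact Finset.sum_congr rfl fun j _ => (P_cons _ _).symm
        rw [integral_congr_ae hae, integral_finset_sum _ (fun j _ => P_integrable _)]
        exact Finset.sum_nonneg fun j _ => ih _ (hr j)

lemma J_nonneg (s : Multiset ℕ) : 0 ≤ ∫ t, P s t ∂satoTate := J_aux s.card s le_rfl

lemma integral_prod_of_indep {Ω : Type*} [MeasurableSpace Ω] {μ : Measure Ω}
    [IsProbabilityMeasure μ] {ι : Type*} (f : ι → Ω → ℝ)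
    (hind : iIndepFun f μ)
    (hmeas : ∀ i, Measurable (f i)) (s : Finset ι) :
    ∫ ω, ∏ i ∈ s, f i ω ∂μ = ∏ i ∈ s, ∫ ω, f i ω ∂μ := by
  classical
  induction s using Finset.cons_induction with
  | empty => simp
  | cons i s hi ih =>
    have hIF : IndepFun (∏ j ∈ s, f j) (f i) μ :=
      hind.indepFun_finsetProd_of_notMem hmeas hi
    have key := hIF.symm.integral_mul_eq_mul_integral (hmeas i).aestronglyMeasurable
      (by
        have hm : Measurable (fun ω => ∏ j ∈ s, f j ω) :=
          Finset.measurable_prod s (fun j _ => hmeas j)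
        have e : (∏ j ∈ s, f j) = fun ω => ∏ j ∈ s, f j ω := by
          funext ω; simp [Finset.prod_apply]
        rw [e]
        exact hm.aestronglyMeasurable)
    simp only [Finset.prod_cons]
    rw [show (∫ ω, f i ω * ∏ j ∈ s, f j ω ∂μ) = ∫ ω, (f i * ∏ j ∈ s, f j) ω ∂μ by
      apply integral_congr_ae; filter_upwards with ω; simp [Finset.prod_apply],
      key]
    rw [show integral μ (∏ j ∈ s, f j) = ∫ ω, ∏ j ∈ s, f j ω ∂μ by
      apply integral_congr_ae; filter_upwards with ω; simp [Finset.prod_apply], ih]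

lemma EX_prod_nonneg {Ω : Type*} [MeasurableSpace Ω] (μ : Measure Ω) [IsProbabilityMeasure μ]
    (θ : ℕ → Ω → ℝ) (hmeas : ∀ p : ℕ, p.Prime → Measurable (θ p))
    (hdist : ∀ p : ℕ, p.Prime → Measure.map (θ p) μ = satoTate)
    (hindep : iIndepFun
      (fun p : {p : ℕ // p.Prime} => θ p.1) μ)
    {k : ℕ} (p : Fin k → ℕ) :
    0 ≤ ∫ ω, ∏ i, X θ (p i) ω ∂μ := by
  classical
  set S : Finset ℕ := Finset.univ.biUnion (fun i => (p i).primeFactors) with hS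
  have hSprime : ∀ q ∈ S, q.Prime := by
    intro q hq
    rw [hS, Finset.mem_biUnion] at hq
    obtain ⟨i, _, hqi⟩ := hq
    exact Nat.prime_of_mem_primeFactors hqi
  set G : ℕ → ℝ → ℝ :=
    fun q t => ∏ i, (U ℝ (((p i).factorization q : ℕ):ℤ)).eval (Real.cos t) with hG
  have hGcont : ∀ q, Continuous (G q) := by
    intro q
    apply continuous_finset_prod
    exact fun i _ => (Polynomial.continuous _).comp Real.continuous_cos
  have step1 : ∀ ω, ∏ i, X θ (p i) ω = ∏ q ∈ S, G q (θ q ω) := by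
    intro ω
    have hXi : ∀ i : Fin k, X θ (p i) ω
        = ∏ q ∈ S, (U ℝ (((p i).factorization q : ℕ):ℤ)).eval (Real.cos (θ q ω)) := by
      intro i
      rw [X]
      apply Finset.prod_subset
      · rw [hS]; exact Finset.subset_biUnion_of_mem (fun i => (p i).primeFactors) (Finset.mem_univ i)
      · intro q _ hq
        have h0 : (p i).factorization q = 0 := by
          rw [← Nat.support_factorization] at hq
          exact Finsupp.notMem_support_iff.mp hq
        rw [h0]
        norm_num [Polynomial.Chebyshev.U_zero]
    calc ∏ i, X θ (p i) ω
        = ∏ i, ∏ q ∈ S, (U ℝ (((p i).factorization q : ℕ):ℤ)).eval (Real.cos (θ q ω)) :=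
          Finset.prod_congr rfl fun i _ => hXi i
      _ = ∏ q ∈ S, G q (θ q ω) := Finset.prod_comm
  -- transfer to the subtype of primes
  set S' : Finset {q : ℕ // q.Prime} :=
    S.attach.map ⟨fun q => ⟨q.1, hSprime q.1 q.2⟩, fun a b hab => Subtype.ext (Subtype.mk_eq_mk.mp hab)⟩ with hS'
  have step2 : ∀ ω, ∏ q ∈ S, G q (θ q ω) = ∏ q' ∈ S', G q'.1 (θ q'.1 ω) := by
    intro ω
    rw [hS', Finset.prod_map]
    exact (Finset.prod_attach S fun q => G q (θ q ω)).symm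
  have hind' : iIndepFun
      (fun q : {q : ℕ // q.Prime} => (G q.1) ∘ (θ q.1)) μ :=
    hindep.comp (fun q => G q.1) (fun q => (hGcont q.1).measurable)
  have step3 : ∫ ω, ∏ q' ∈ S', G q'.1 (θ q'.1 ω) ∂μ
      = ∏ q' ∈ S', ∫ ω, G q'.1 (θ q'.1 ω) ∂μ :=
    integral_prod_of_indep _ hind'
      (fun q => (hGcont q.1).measurable.comp (hmeas q.1 q.2)) S'
  have step4 : ∀ q : ℕ, q.Prime → 0 ≤ ∫ ω, G q (θ q ω) ∂μ := by
    intro q hq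
    have hmap : ∫ t, G q t ∂satoTate = ∫ ω, G q (θ q ω) ∂μ := by
      rw [← hdist q hq]
      exact integral_map (hmeas q hq).aemeasurable (hGcont q).aestronglyMeasurable
    rw [← hmap]
    have hGP : G q = P (Multiset.map (fun i => (p i).factorization q) Finset.univ.val) := by
      funext t
      simp only [hG]
      rw [Finset.prod_eq_multiset_prod]
      unfold P
      rw [Multiset.map_map]
      rfl
    rw [hGP]
    exact J_nonneg _
  calc (0:ℝ) ≤ ∏ q' ∈ S', ∫ ω, G q'.1 (θ q'.1 ω) ∂μ :=
        Finset.prod_nonneg fun q' _ => step4 q'.1 q'.2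
    _ = ∫ ω, ∏ q' ∈ S', G q'.1 (θ q'.1 ω) ∂μ := step3.symm
    _ = ∫ ω, ∏ i, X θ (p i) ω ∂μ := by
        apply integral_congr_ae; filter_upwards with ω
        rw [← step2, ← step1]

end SatoTateAux

theorem stmt_6 {Ω : Type*} [MeasurableSpace Ω] (μ : Measure Ω) [IsProbabilityMeasure μ]
    (θ : ℕ → Ω → ℝ)
    (hmeas : ∀ p : ℕ, p.Prime → Measurable (θ p))
    (hrange : ∀ p : ℕ, p.Prime → ∀ ω : Ω, θ p ω ∈ Set.Icc 0 Real.pi)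
    (hdist : ∀ p : ℕ, p.Prime → Measure.map (θ p) μ = satoTate)
    (hindep : iIndepFun
      (fun p : {p : ℕ // p.Prime} => θ p.1) μ)
    (g h : ℕ → ℝ) (hgh : ∀ n : ℕ, 1 ≤ n → h n ≤ g n) (hh : ∀ n : ℕ, 1 ≤ n → 0 ≤ h n)
    (x : ℝ) (hx : 1 ≤ x) (ℓ : ℕ) (hℓ : 1 ≤ ℓ) :
    ∫ ω, (∑ n ∈ Finset.Icc 1 ⌊x⌋₊, X θ n ω * h n) ^ (2 * ℓ) ∂μ ≤
      ∫ ω, (∑ n ∈ Finset.Icc 1 ⌊x⌋₊, X θ n ω * g n) ^ (2 * ℓ) ∂μ := by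
  classical
  open SatoTateAux Polynomial.Chebyshev in
  set s : Finset ℕ := Finset.Icc 1 ⌊x⌋₊ with hs
  have Ubdd : ∀ a : ℕ, ∃ C : ℝ, ∀ r : ℝ, |(U ℝ (a:ℤ)).eval (Real.cos r)| ≤ C := by
    intro a
    obtain ⟨C, hC⟩ := (isCompact_Icc (a := (-1:ℝ)) (b := 1)).exists_bound_of_continuousOn
      (Polynomial.continuous (U ℝ (a:ℤ))).continuousOn
    exact ⟨C, fun r => hC _ ⟨Real.neg_one_le_cos r, Real.cos_le_one r⟩⟩
  have Xmeas : ∀ n : ℕ, Measurable (X θ n) := by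
    intro n
    unfold X
    apply Finset.measurable_prod
    intro q hq
    exact ((Polynomial.continuous _).comp Real.continuous_cos).measurable.comp
      (hmeas q (Nat.prime_of_mem_primeFactors hq))
  have XB : ∀ n : ℕ, ∃ C : ℝ, ∀ ω, |X θ n ω| ≤ C := by
    intro n
    choose C hC using Ubdd
    refine ⟨∏ q ∈ n.primeFactors, C (n.factorization q), fun ω => ?_⟩
    rw [X, Finset.abs_prod]
    exact Finset.prod_le_prod (fun q _ => abs_nonneg _) (fun q _ => hC _ _)
  have prodmeas : ∀ p : Fin (2*ℓ) → ℕ, Measurable (fun ω => ∏ i, X θ (p i) ω) :=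
    fun p => Finset.measurable_prod _ (fun i _ => Xmeas (p i))
  have prodB : ∀ p : Fin (2*ℓ) → ℕ, ∃ C : ℝ, ∀ ω, |∏ i, X θ (p i) ω| ≤ C := by
    intro p
    choose C hC using fun i => XB (p i)
    refine ⟨∏ i, C i, fun ω => ?_⟩
    rw [Finset.abs_prod]
    exact Finset.prod_le_prod (fun i _ => abs_nonneg _) (fun i _ => hC i ω)
  have intg : ∀ (c : ℕ → ℝ) (p : Fin (2*ℓ) → ℕ),
      Integrable (fun ω => (∏ i, X θ (p i) ω) * ∏ i, c (p i)) μ := by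
    intro c p
    obtain ⟨C, hC⟩ := prodB p
    refine Integrable.mono' (integrable_const (C * |∏ i, c (p i)|))
      ((prodmeas p).mul_const _).aestronglyMeasurable
      (Filter.Eventually.of_forall fun ω => ?_)
    rw [Real.norm_eq_abs, abs_mul]
    exact mul_le_mul_of_nonneg_right (hC ω) (abs_nonneg _)
  have expand : ∀ (c : ℕ → ℝ) (ω : Ω), (∑ n ∈ s, X θ n ω * c n) ^ (2*ℓ)
      = ∑ p ∈ Fintype.piFinset (fun _ : Fin (2*ℓ) => s),
          (∏ i, X θ (p i) ω) * ∏ i, c (p i) := by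
    intro c ω
    have h1 : (∑ n ∈ s, X θ n ω * c n) ^ (2*ℓ)
        = ∏ _i : Fin (2*ℓ), (∑ n ∈ s, X θ n ω * c n) := by
      rw [Finset.prod_const, Finset.card_univ, Fintype.card_fin]
    rw [h1, Finset.prod_univ_sum]
    exact Finset.sum_congr rfl fun p _ => Finset.prod_mul_distrib
  have key : ∀ (c : ℕ → ℝ), ∫ ω, (∑ n ∈ s, X θ n ω * c n) ^ (2*ℓ) ∂μ
      = ∑ p ∈ Fintype.piFinset (fun _ : Fin (2*ℓ) => s),
          (∫ ω, ∏ i, X θ (p i) ω ∂μ) * ∏ i, c (p i) := by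
    intro c
    rw [integral_congr_ae (Filter.Eventually.of_forall (expand c)),
      integral_finset_sum _ (fun p _ => intg c p)]
    exact Finset.sum_congr rfl fun p _ => integral_mul_const _ _
  rw [key g, key h]
  apply Finset.sum_le_sum
  intro p hp
  have hp1 : ∀ i, 1 ≤ p i := by
    rw [Fintype.mem_piFinset] at hp
    intro i
    exact (Finset.mem_Icc.mp (hp i)).1
  have hEX : 0 ≤ ∫ ω, ∏ i, X θ (p i) ω ∂μ :=
    SatoTateAux.EX_prod_nonneg μ θ hmeas hdist hindep p
  exact mul_le_mul_of_nonneg_left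
    (Finset.prod_le_prod (fun i _ => hh _ (hp1 i)) (fun i _ => hgh _ (hp1 i))) hEX
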